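/- Let L₂ = {aᵐ·bⁿ·a² : m ≥ 3, n ≥ 1} over the alphabet {a, b}. For every word w ∈ L₂ and all (possibly empty) words p, q over {a, b}: p·w·q ∈ L₂ if and only if p = aⁱ for some i ≥ 0 and q is the empty word. -/

import Mathlib

/-- The two-letter alphabet `{a, b}`. -/
inductive AB : Type
  | a : AB
  | b : AB

/-- Words over `{a, b}`, as elements of the free monoid (the empty word is `1`). -/
abbrev Word : Type := FreeMonoid AB

/-- The letter `a` as a word. -/
def wa : Word := FreeMonoid.of AB.a

/-- The letter `b` as a word. -/
def wb : Word := FreeMonoid.of AB.b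

/-- Syntactic equivalence of `u` and `v` with respect to the language `L`:
for all (possibly empty) words `p, q`, `p·u·q ∈ L ↔ p·v·q ∈ L`. -/
def SynEq (L : Set Word) (u v : Word) : Prop :=
  ∀ p q : Word, p * u * q ∈ L ↔ p * v * q ∈ L

/-- The language `L₂ = a²a⁺b⁺a² = {aᵐ·bⁿ·a² : m ≥ 3, n ≥ 1}`. -/
def L2 : Set Word :=
  {w | ∃ m n : ℕ, 3 ≤ m ∧ 1 ≤ n ∧ w = wa ^ m * wb ^ n * wa ^ 2}

lemma toList_of_pow (x : AB) (k : ℕ) :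
    FreeMonoid.toList (FreeMonoid.of x ^ k) = List.replicate k x := by
  induction k with
  | zero => simp
  | succ k ih => rw [pow_succ, FreeMonoid.toList_mul, ih, FreeMonoid.toList_of,
      List.replicate_succ' ]

lemma a_ne_b : AB.a ≠ AB.b := fun h => AB.noConfusion h

/-- The canonical word, with explicit letters at each index. -/
lemma z_spec (M N i : ℕ)
    (h : i < (List.replicate M AB.a ++ (List.replicate N AB.b ++ List.replicate 2 AB.a)).length) :
    (List.replicate M AB.a ++ (List.replicate N AB.b ++ List.replicate 2 AB.a))[i]
      = if M ≤ i ∧ i < M + N then AB.b else AB.a := by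
  simp only [List.length_append, List.length_replicate] at h
  rcases lt_or_ge i M with h1 | h1
  · rw [List.getElem_append_left (by simpa using h1), List.getElem_replicate]
    simp [Nat.not_le.2 h1]
  · rw [List.getElem_append_right (by simpa using h1)]
    rcases lt_or_ge i (M + N) with h2 | h2
    · rw [List.getElem_append_left (by simp; try omega), List.getElem_replicate]
      simp [h1, h2]
    · rw [List.getElem_append_right (by simp; try omega), List.getElem_replicate]
      have : ¬ (M ≤ i ∧ i < M + N) := by omega
      simp [this]

/-- for `w ∈ L₂` and all (possibly empty) words `p, q`,
`p·w·q ∈ L₂` if and only if `p = aⁱ` for some `i ≥ 0` and `q` is the empty word. -/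
theorem contexts_of_L2 (w : Word) (hw : w ∈ L2) (p q : Word) :
    p * w * q ∈ L2 ↔ (∃ i : ℕ, p = wa ^ i) ∧ q = 1 := by
  obtain ⟨m, n, hm, hn, hwe⟩ := hw
  constructor
  · rintro ⟨M, N, hM, hN, hEq⟩
    -- pass to lists
    have h1 : FreeMonoid.toList p ++ (List.replicate m AB.a ++ (List.replicate n AB.b ++
          (List.replicate 2 AB.a ++ FreeMonoid.toList q)))
        = List.replicate M AB.a ++ (List.replicate N AB.b ++ List.replicate 2 AB.a) := by
      have := congrArg FreeMonoid.toList (hwe ▸ hEq)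
      simp only [FreeMonoid.toList_mul, toList_of_pow, wa, wb] at this
      simpa [List.append_assoc] using this
    have hlen : (FreeMonoid.toList p).length + m + n + 2 + (FreeMonoid.toList q).length
        = M + N + 2 := by
      have := congrArg List.length h1
      simp at this
      omega
    -- letter at index |p| + m + (n-1) is b
    have hb : (List.replicate M AB.a ++ (List.replicate N AB.b ++
        List.replicate 2 AB.a))[(FreeMonoid.toList p).length + (m + (n - 1))]'(by simp; try omega)
        = AB.b := by
      rw [← List.getElem_of_eq h1 (by simp; try omega)]
      rw [List.getElem_append_right (by omega),
          List.getElem_append_right (by simp; try omega)]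
      rw [List.getElem_append_left (by simp; try omega), List.getElem_replicate]
    -- letter at index |p| + m + n is a
    have ha : (List.replicate M AB.a ++ (List.replicate N AB.b ++
        List.replicate 2 AB.a))[(FreeMonoid.toList p).length + (m + n)]'(by simp; try omega)
        = AB.a := by
      rw [← List.getElem_of_eq h1 (by simp; try omega)]
      rw [List.getElem_append_right (by omega),
          List.getElem_append_right (by simp; try omega),
          List.getElem_append_right (by simp; try omega)]
      rw [List.getElem_append_left (by simp; try omega), List.getElem_replicate]
    -- letter at index |p| is a
    have ha0 : (List.replicate M AB.a ++ (List.replicate N AB.b ++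
        List.replicate 2 AB.a))[(FreeMonoid.toList p).length]'(by simp; try omega)
        = AB.a := by
      rw [← List.getElem_of_eq h1 (by simp; try omega)]
      have hle : (FreeMonoid.toList p).length ≤ (FreeMonoid.toList p).length := le_rfl
      rw [List.getElem_append_right hle,
          List.getElem_append_left (by simp; try omega), List.getElem_replicate]
    rw [z_spec M N _ (by simp; try omega)] at ha0
    rw [z_spec M N _ (by simp; try omega)] at hb
    rw [z_spec M N _ (by simp; try omega)] at ha
    have hcb : M ≤ (FreeMonoid.toList p).length + (m + (n - 1)) ∧
        (FreeMonoid.toList p).length + (m + (n - 1)) < M + N := by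
      by_contra hc
      rw [if_neg hc] at hb
      exact a_ne_b hb
    have hca : ¬ (M ≤ (FreeMonoid.toList p).length + (m + n) ∧
        (FreeMonoid.toList p).length + (m + n) < M + N) := by
      intro hc
      rw [if_pos hc] at ha
      exact a_ne_b ha.symm
    have hca0 : ¬ (M ≤ (FreeMonoid.toList p).length ∧
        (FreeMonoid.toList p).length < M + N) := by
      intro hc
      rw [if_pos hc] at ha0
      exact a_ne_b ha0.symm
    have hQ0 : (FreeMonoid.toList q).length = 0 := by omega
    have hq1 : q = 1 := by
      apply FreeMonoid.toList.injective
      rw [FreeMonoid.toList_one, List.length_eq_zero_iff.mp hQ0]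
    have hPl : (FreeMonoid.toList p).length < M := by omega
    -- p is the prefix of the canonical word
    have hPtake : FreeMonoid.toList p = List.replicate (FreeMonoid.toList p).length AB.a := by
      calc FreeMonoid.toList p
          = List.take (FreeMonoid.toList p).length (FreeMonoid.toList p ++
            (List.replicate m AB.a ++ (List.replicate n AB.b ++
            (List.replicate 2 AB.a ++ FreeMonoid.toList q)))) := List.take_left.symm
        _ = List.take (FreeMonoid.toList p).length (List.replicate M AB.a ++
            (List.replicate N AB.b ++ List.replicate 2 AB.a)) := by rw [h1]
        _ = List.replicate (FreeMonoid.toList p).length AB.a := by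
              rw [List.take_append_of_le_length (by simpa using hPl.le),
                List.take_replicate]
              congr 1
              omega
    refine ⟨⟨(FreeMonoid.toList p).length, ?_⟩, hq1⟩
    apply FreeMonoid.toList.injective
    rw [wa, toList_of_pow]
    exact hPtake
  · rintro ⟨⟨i, hi⟩, hq⟩
    refine ⟨i + m, n, by omega, hn, ?_⟩
    rw [hi, hq, hwe, mul_one, pow_add]
    simp [mul_assoc]
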